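/- Under the décalage isomorphism, the conditions on a degree -1 graded-antisymmetric bilinear map h on a DGLA L (namely [a,b] = dh(a,b)+h(da,b)+(-1)^{|a|}h(a,db) and the cyclic identity ∮[h(a,b),c] + ∮h([a,b],c) = 0) are equivalent to the conditions [r,q₁]_{NR} = q₂ and [r,q₂]_{NR} = 0, where V = L[1], q₁ = -d, q₂(a,b) = (-1)^{|a|}[a,b], r(a,b) = (-1)^{|a|}h(a,b), and [·,·]_{NR} is the Nijenhuis-Richardson bracket on Hom(S̄^c V, V). -/

import Mathlib

/-!
STATEMENT 4: under the décalage isomorphism `V = L[1]`, the homotopy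
abelianity conditions on a degree `-1` graded-antisymmetric bilinear map `h`
on a DGLA `L` are equivalent to the Nijenhuis–Richardson identities
`[r,q₁]_{NR} = q₂` and `[r,q₂]_{NR} = 0`, where `q₁ = -d`,
`q₂(a,b) = (-1)^{|a|}[a,b]` and `r(a,b) = (-1)^{|a|}h(a,b)`.  For maps of
arities ≤ 2 the Nijenhuis–Richardson bracket is given by explicit finite
sums of compositions with Koszul signs (w.r.t. the shifted degrees
`|a| - 1`), and the two identities are written out accordingly below.
-/

universe u

/-- A bundled ℤ-graded differential graded Lie algebra over `K`. -/
structure DGLA (K : Type u) [Field K] where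
  carrier : Type u
  [acg : AddCommGroup carrier]
  [mod : Module K carrier]
  grading : ℤ → Submodule K carrier
  grading_top : (⨆ i, grading i) = ⊤
  bracket : carrier →ₗ[K] carrier →ₗ[K] carrier
  d : carrier →ₗ[K] carrier
  d_sq : ∀ x, d (d x) = 0
  d_deg : ∀ i, ∀ a ∈ grading i, d a ∈ grading (i + 1)
  bracket_deg : ∀ i j, ∀ a ∈ grading i, ∀ b ∈ grading j, bracket a b ∈ grading (i + j)
  bracket_antisymm : ∀ i j, ∀ a ∈ grading i, ∀ b ∈ grading j,
    bracket a b = -((-1 : K) ^ (i * j) • bracket b a)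
  jacobi : ∀ i j, ∀ a ∈ grading i, ∀ b ∈ grading j, ∀ c,
    bracket a (bracket b c) =
      bracket (bracket a b) c + (-1 : K) ^ (i * j) • bracket b (bracket a c)
  leibniz : ∀ i, ∀ a ∈ grading i, ∀ b,
    d (bracket a b) = bracket (d a) b + (-1 : K) ^ i • bracket a (d b)

attribute [instance] DGLA.acg DGLA.mod

/-- A morphism of differential graded Lie algebras. -/
structure DGLAHom (K : Type u) [Field K] (A B : DGLA K) where
  toFun : A.carrier →ₗ[K] B.carrier
  map_d : ∀ x, toFun (A.d x) = B.d (toFun x)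
  map_bracket : ∀ x y, toFun (A.bracket x y) = B.bracket (toFun x) (toFun y)
  map_grading : ∀ i, ∀ a ∈ A.grading i, toFun a ∈ B.grading i

/-- A morphism of DGLAs is a quasi-isomorphism if it is injective and
surjective on cohomology (stated elementwise). -/
def DGLAHom.IsQuasiIso {K : Type u} [Field K] {A B : DGLA K} (f : DGLAHom K A B) : Prop :=
  (∀ x, A.d x = 0 → (∃ m, f.toFun x = B.d m) → ∃ l, x = A.d l) ∧
  (∀ y, B.d y = 0 → ∃ x, A.d x = 0 ∧ ∃ m, y - f.toFun x = B.d m)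

/-- A DGLA is abelian if its bracket vanishes identically. -/
def DGLA.IsAbelian {K : Type u} [Field K] (A : DGLA K) : Prop := ∀ x y, A.bracket x y = 0

/-- A DGLA is homotopy abelian if it is connected to an abelian DGLA by a roof
of quasi-isomorphisms. -/
def DGLA.IsHomotopyAbelian {K : Type u} [Field K] (A : DGLA K) : Prop :=
  ∃ (M H : DGLA K) (f : DGLAHom K M A) (g : DGLAHom K M H),
    H.IsAbelian ∧ f.IsQuasiIso ∧ g.IsQuasiIso


section

variable {K : Type u} [Field K] (L : DGLA K)

/-- `r(a,b) = (-1)^{|a|} h(a,b)` where `i` is the degree of the first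
argument. -/
def decR (h : L.carrier →ₗ[K] L.carrier →ₗ[K] L.carrier)
    (i : ℤ) (a b : L.carrier) : L.carrier := (-1 : K) ^ i • h a b

/-- `q₂(a,b) = (-1)^{|a|} [a,b]` where `i` is the degree of the first
argument. -/
def decQ2 (i : ℤ) (a b : L.carrier) : L.carrier := (-1 : K) ^ i • L.bracket a b

/-- `q₁ = -d`. -/
def decQ1 : L.carrier →ₗ[K] L.carrier := -L.d

end

section SgnAux
variable {K : Type u} [Field K]

lemma sgn_congr (m n : ℤ) (h : Even (m - n)) : (-1:K)^m = (-1:K)^n := by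
  have h1 : (-1:K) ≠ 0 := by norm_num
  calc (-1:K)^m = (-1:K)^(m-n) * (-1:K)^n := by
        rw [← zpow_add₀ h1]; ring_nf
    _ = (-1:K)^n := by rw [h.neg_one_zpow, one_mul]

lemma sgn_one (m : ℤ) (h : Even m) : (-1:K)^m = 1 := h.neg_one_zpow

lemma sgn_neg_one (m : ℤ) (h : Even (m-1)) : (-1:K)^m = -1 := by
  rw [sgn_congr m 1 (by simpa using h)]; norm_num

lemma sgn_split2 (m p q : ℤ) (h : Even (m - (p+q))) :
    (-1:K)^m = (-1:K)^p * (-1:K)^q := by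
  rw [sgn_congr m (p+q) h, zpow_add₀ (by norm_num : (-1:K) ≠ 0)]

lemma sgn_split2_neg (m p q : ℤ) (h : Even (m - (p+q) - 1)) :
    (-1:K)^m = -((-1:K)^p * (-1:K)^q) := by
  rw [sgn_congr m (p+q+1) (by obtain ⟨r,hr⟩ := h; exact ⟨r, by linarith⟩),
    zpow_add₀ (by norm_num : (-1:K) ≠ 0), zpow_add₀ (by norm_num : (-1:K) ≠ 0)]
  norm_num

lemma sgn_split3 (m p q r : ℤ) (h : Even (m - (p+q+r))) :
    (-1:K)^m = (-1:K)^p * (-1:K)^q * (-1:K)^r := by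
  rw [sgn_congr m (p+q+r) h, zpow_add₀ (by norm_num : (-1:K) ≠ 0),
    zpow_add₀ (by norm_num : (-1:K) ≠ 0)]

lemma sgn_split3_neg (m p q r : ℤ) (h : Even (m - (p+q+r) - 1)) :
    (-1:K)^m = -((-1:K)^p * (-1:K)^q * (-1:K)^r) := by
  rw [sgn_congr m (p+q+r+1) (by obtain ⟨s,hr⟩ := h; exact ⟨s, by linarith⟩),
    zpow_add₀ (by norm_num : (-1:K) ≠ 0), zpow_add₀ (by norm_num : (-1:K) ≠ 0),
    zpow_add₀ (by norm_num : (-1:K) ≠ 0)]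
  norm_num
end SgnAux
section SgnAux2
variable {K : Type u} [Field K]
lemma sgn_congr_neg (m n : ℤ) (h : Even (m - n - 1)) : (-1:K)^m = -(-1:K)^n := by
  rw [sgn_congr m (n+1) (by obtain ⟨r,hr⟩ := h; exact ⟨r, by linarith⟩),
    zpow_add_one₀ (by norm_num : (-1:K) ≠ 0)]; ring
end SgnAux2

/-- For a DGLA `L` with a degree `-1` graded-antisymmetric
bilinear map `h`, the conditions
`[a,b] = dh(a,b) + h(da,b) + (-1)^{|a|}h(a,db)` and
`∮[h(a,b),c] + ∮h([a,b],c) = 0` hold if and only if the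
Nijenhuis–Richardson identities `[r,q₁]_{NR} = q₂` and `[r,q₂]_{NR} = 0`
hold. -/
theorem decalage_NR_equivalence (K : Type u) [Field K] [CharZero K]
    (L : DGLA K) (h : L.carrier →ₗ[K] L.carrier →ₗ[K] L.carrier)
    (h_deg : ∀ i j, ∀ a ∈ L.grading i, ∀ b ∈ L.grading j, h a b ∈ L.grading (i + j - 1))
    (h_antisymm : ∀ i j, ∀ a ∈ L.grading i, ∀ b ∈ L.grading j,
      h a b = -((-1 : K) ^ (i * j) • h b a)) :
    -- conditions (2) and (3) on h …
    ((∀ i, ∀ a ∈ L.grading i, ∀ b,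
        L.bracket a b = L.d (h a b) + h (L.d a) b + (-1 : K) ^ i • h a (L.d b)) ∧
     (∀ i j k, ∀ a ∈ L.grading i, ∀ b ∈ L.grading j, ∀ c ∈ L.grading k,
        (L.bracket (h a b) c + (-1 : K) ^ (i * (j + k)) • L.bracket (h b c) a
            + (-1 : K) ^ (k * (i + j)) • L.bracket (h c a) b)
          + (h (L.bracket a b) c + (-1 : K) ^ (i * (j + k)) • h (L.bracket b c) a
            + (-1 : K) ^ (k * (i + j)) • h (L.bracket c a) b) = 0))
    ↔
    -- … are equivalent to [r,q₁]_NR = q₂ and [r,q₂]_NR = 0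
    ((∀ i j, ∀ a ∈ L.grading i, ∀ b ∈ L.grading j,
        decR L h (i + 1) (decQ1 L a) b
          + (-1 : K) ^ (i - 1) • decR L h i a (decQ1 L b)
          - decQ1 L (decR L h i a b)
        = decQ2 L i a b) ∧
     (∀ i j k, ∀ a ∈ L.grading i, ∀ b ∈ L.grading j, ∀ c ∈ L.grading k,
        (decR L h (i + j) (decQ2 L i a b) c
            + (-1 : K) ^ ((j - 1) * (k - 1)) • decR L h (i + k) (decQ2 L i a c) b
            + (-1 : K) ^ ((i - 1) * (j + k - 2)) • decR L h (j + k) (decQ2 L j b c) a)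
          - (decQ2 L (i + j - 1) (decR L h i a b) c
            + (-1 : K) ^ ((j - 1) * (k - 1)) • decQ2 L (i + k - 1) (decR L h i a c) b
            + (-1 : K) ^ ((i - 1) * (j + k - 2)) • decQ2 L (j + k - 1) (decR L h j b c) a)
        = 0)) := by
  have hne : (-1:K) ≠ 0 := by norm_num
  constructor
  · rintro ⟨H1, H2⟩
    constructor
    · intro i j a ha b hb
      simp only [decR, decQ1, decQ2, LinearMap.neg_apply, map_neg, map_smul,
        LinearMap.smul_apply, smul_neg, neg_smul, neg_neg, smul_smul, mul_neg, neg_mul,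
        ← zpow_add₀ hne]
      rw [H1 i a ha b, sgn_neg_one (i-1+i) ⟨i-1, by ring⟩,
        sgn_congr_neg (i+1) i ⟨0, by ring⟩]
      simp only [smul_add, smul_smul, ← zpow_add₀ hne]
      rw [sgn_one (i+i) ⟨i, by ring⟩]
      simp only [neg_smul, neg_neg, one_smul]
      abel
    · intro i j k a ha b hb c hc
      simp only [decR, decQ1, decQ2]
      rw [L.bracket_antisymm i k a ha c hc, h_antisymm i k a ha c hc]
      simp only [LinearMap.neg_apply, map_neg, map_smul, LinearMap.smul_apply, smul_neg,
        neg_smul, neg_neg, smul_smul, mul_neg, neg_mul, ← zpow_add₀ hne]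
      have H' := H2 i j k a ha b hb c hc
      rw [sgn_split2 (i*(j+k)) (i*j) (i*k) ⟨0, by ring⟩,
        sgn_split2 (k*(i+j)) (i*k) (j*k) ⟨0, by ring⟩] at H'
      rw [sgn_congr (i+j+i) j ⟨i, by ring⟩,
        sgn_split3_neg ((j-1)*(k-1) + (i+k+(i+i*k))) j (i*k) (j*k) ⟨i-j, by ring⟩,
        sgn_split3 ((i-1)*(j+k-2) + (j+k+j)) j (i*j) (i*k) ⟨1-i, by ring⟩,
        sgn_congr_neg (i+j-1+i) j ⟨i-1, by ring⟩,
        sgn_split3 ((j-1)*(k-1) + (i+k-1+(i+i*k))) j (i*k) (j*k) ⟨i-j, by ring⟩,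
        sgn_split3_neg ((i-1)*(j+k-2) + (j+k-1+j)) j (i*j) (i*k) ⟨-i, by ring⟩]
      linear_combination (norm := module) ((-1:K)^j) • H'
  · rintro ⟨N1, N2⟩
    constructor
    · intro i a ha b
      have hb : b ∈ (⨆ j, L.grading j) := by rw [L.grading_top]; trivial
      refine Submodule.iSup_induction (motive := fun b => (L.bracket a) b =
          L.d ((h a) b) + (h (L.d a)) b + (-1:K) ^ i • (h a) (L.d b)) _ hb ?_ ?_ ?_
      · intro j b hb
        have G := N1 i j a ha b hb
        simp only [decR, decQ1, decQ2, LinearMap.neg_apply, map_neg, map_smul,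
          LinearMap.smul_apply, smul_neg, neg_smul, neg_neg, smul_smul, mul_neg, neg_mul,
          ← zpow_add₀ hne] at G
        rw [sgn_neg_one (i-1+i) ⟨i-1, by ring⟩, sgn_congr_neg (i+1) i ⟨0, by ring⟩] at G
        apply smul_right_injective L.carrier (zpow_ne_zero i hne : ((-1:K)^i) ≠ 0)
        show (-1:K)^i • _ = (-1:K)^i • _
        simp only [smul_add, smul_smul, ← zpow_add₀ hne]
        rw [sgn_one (i+i) ⟨i, by ring⟩]
        simp only [neg_smul, neg_neg, one_smul] at G ⊢
        linear_combination (norm := module) -G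
      · simp
      · intro x y hx hy
        simp only [map_add, smul_add, hx, hy]
        abel
    · intro i j k a ha b hb c hc
      have G := N2 i j k a ha b hb c hc
      simp only [decR, decQ1, decQ2] at G
      rw [L.bracket_antisymm i k a ha c hc, h_antisymm i k a ha c hc] at G
      simp only [LinearMap.neg_apply, map_neg, map_smul, LinearMap.smul_apply, smul_neg,
        neg_smul, neg_neg, smul_smul, mul_neg, neg_mul, ← zpow_add₀ hne] at G
      rw [sgn_congr (i+j+i) j ⟨i, by ring⟩,
        sgn_split3_neg ((j-1)*(k-1) + (i+k+(i+i*k))) j (i*k) (j*k) ⟨i-j, by ring⟩,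
        sgn_split3 ((i-1)*(j+k-2) + (j+k+j)) j (i*j) (i*k) ⟨1-i, by ring⟩,
        sgn_congr_neg (i+j-1+i) j ⟨i-1, by ring⟩,
        sgn_split3 ((j-1)*(k-1) + (i+k-1+(i+i*k))) j (i*k) (j*k) ⟨i-j, by ring⟩,
        sgn_split3_neg ((i-1)*(j+k-2) + (j+k-1+j)) j (i*j) (i*k) ⟨-i, by ring⟩] at G
      rw [sgn_split2 (i*(j+k)) (i*j) (i*k) ⟨0, by ring⟩,
        sgn_split2 (k*(i+j)) (i*k) (j*k) ⟨0, by ring⟩]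
      apply smul_right_injective L.carrier (zpow_ne_zero j hne : ((-1:K)^j) ≠ 0)
      show (-1:K)^j • _ = (-1:K)^j • _
      rw [smul_zero]
      linear_combination (norm := module) G
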